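/- If x : [a,b] → ℝ is continuously differentiable and α : [a,b] → (0,1) is differentiable, then for t ∈ (a,b), ᶜₐD_t^{α(t)} x(t) = ᶜₐ𝒟_t^{α(t)} x(t) − (α'(t) Ψ(1-α(t))/Γ(1-α(t))) ∫_a^t (t-τ)^{-α(t)} [x(τ)-x(a)] dτ, where Ψ is the digamma function. -/

import Mathlib

open Real intervalIntegral Set

open MeasureTheory Metric

set_option maxHeartbeats 1000000

open Real intervalIntegral Set MeasureTheory Metric

lemma meas_help {E : Type*} [NormedAddCommGroup E] (f : ℝ → E)
    (hf : ContinuousOn f (Set.Ioo (0:ℝ) 1)) :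
    AEStronglyMeasurable f (MeasureTheory.volume.restrict (Set.uIoc (0:ℝ) 1)) := by
  rw [Set.uIoc_of_le zero_le_one, ← Measure.restrict_congr_set Ioo_ae_eq_Ioc]
  exact hf.aestronglyMeasurable measurableSet_Ioo

lemma log_le_rpow_div' {y δ : ℝ} (hy : 0 < y) (hδ : 0 < δ) : Real.log y ≤ y ^ δ / δ := by
  have h1 : Real.log (y ^ δ) ≤ y ^ δ - 1 := Real.log_le_sub_one_of_pos (Real.rpow_pos_of_pos hy δ)
  rw [Real.log_rpow hy] at h1
  have h2 : Real.log y ≤ (y ^ δ - 1) / δ := by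
    rw [le_div_iff₀ hδ]; linarith [h1]
  refine h2.trans ?_
  gcongr
  linarith

-- key lemma: differentiability in both parameters of the scaled integral
lemma K_diff (a b : ℝ) (hab : a < b) (x : ℝ → ℝ) (hx : ContDiffOn ℝ 1 x (Set.Icc a b))
    (β₀ t : ℝ) (hβ : β₀ ∈ Set.Ioo (0:ℝ) 1) (ht : t ∈ Set.Ioo a b) :
    DifferentiableAt ℝ
      (fun p : ℝ × ℝ => ∫ v in (0:ℝ)..1, (1 - v) ^ (-p.1) * (x ((p.2 - a) * v + a) - x a))
      (β₀, t) := by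
  obtain ⟨hb0, hb1⟩ := hβ
  obtain ⟨hat, htb⟩ := ht
  set c : ℝ := (1 + β₀) / 2 with hc_def
  set δ : ℝ := (1 - β₀) / 4 with hδ_def
  set c' : ℝ := c + δ with hc'_def
  have hβc : β₀ < c := by rw [hc_def]; linarith
  have hc1 : c < 1 := by rw [hc_def]; linarith
  have hδ0 : 0 < δ := by rw [hδ_def]; linarith
  have hδ1 : δ ≤ 1 := by rw [hδ_def]; linarith
  have hc'1 : c' < 1 := by rw [hc'_def, hc_def, hδ_def]; linarith
  have hc'0 : 0 < c' := by rw [hc'_def, hc_def, hδ_def]; linarith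
  set ε : ℝ := min (c - β₀) (min ((t - a) / 2) ((b - t) / 2)) with hε_def
  have hε0 : 0 < ε := by
    refine lt_min (by linarith) (lt_min (by linarith) (by linarith))
  -- facts about points in the ball
  have hball : ∀ p ∈ ball ((β₀ : ℝ), t) ε, p.1 ≤ c ∧ a < p.2 ∧ p.2 < b := by
    rintro ⟨p1, p2⟩ hp
    rw [mem_ball, Prod.dist_eq, max_lt_iff] at hp
    obtain ⟨h1, h2⟩ := hp
    rw [Real.dist_eq, abs_lt] at h1 h2
    have e1 : ε ≤ c - β₀ := min_le_left _ _
    have e2 : ε ≤ (t - a) / 2 := (min_le_right _ _).trans (min_le_left _ _)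
    have e3 : ε ≤ (b - t) / 2 := (min_le_right _ _).trans (min_le_right _ _)
    exact ⟨by simp only; linarith, by simp only; linarith, by simp only; linarith⟩
  -- bounds on x and its derivative
  obtain ⟨X, hX⟩ := isCompact_Icc.exists_bound_of_continuousOn hx.continuousOn
  have hX0 : 0 ≤ X := le_trans (norm_nonneg _) (hX a ⟨le_rfl, hab.le⟩)
  set x' : ℝ → ℝ := derivWithin x (Set.Icc a b) with hx'_def
  have hx'c : ContinuousOn x' (Set.Icc a b) :=
    hx.continuousOn_derivWithin (uniqueDiffOn_Icc hab) le_rfl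
  obtain ⟨X', hX'⟩ := isCompact_Icc.exists_bound_of_continuousOn hx'c
  have hX'0 : 0 ≤ X' := le_trans (norm_nonneg _) (hX' a ⟨le_rfl, hab.le⟩)
  have hxd : ∀ y ∈ Set.Ioo a b, HasDerivAt x (x' y) y := by
    intro y hy
    have hmem : Set.Icc a b ∈ nhds y := Icc_mem_nhds hy.1 hy.2
    have hd := ((hx.differentiableOn one_ne_zero) y (Set.Ioo_subset_Icc_self hy)).differentiableAt hmem
    have := hd.hasDerivAt
    rwa [hx'_def, derivWithin_of_mem_nhds hmem]
  set C : ℝ := 2 * X / δ + X' with hC_def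
  have hC2X : 2 * X ≤ C := by
    rw [hC_def]
    have : 2 * X ≤ 2 * X / δ := by
      rw [le_div_iff₀ hδ0]; nlinarith
    linarith
  -- the candidate fderiv
  set F' : (ℝ × ℝ) → ℝ → (ℝ × ℝ) →L[ℝ] ℝ := fun p v =>
    ((-Real.log (1 - v) * ((1 - v) ^ (-p.1) * (x ((p.2 - a) * v + a) - x a))) •
      ContinuousLinearMap.fst ℝ ℝ ℝ) +
    (((1 - v) ^ (-p.1) * (derivWithin x (Set.Icc a b) ((p.2 - a) * v + a) * v)) •
      ContinuousLinearMap.snd ℝ ℝ ℝ) with hF'_def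
  have hIoo : ∀ᵐ v ∂(MeasureTheory.volume.restrict (Set.uIoc (0:ℝ) 1)), v ∈ Set.Ioo (0:ℝ) 1 := by
    rw [Set.uIoc_of_le zero_le_one, ← Measure.restrict_congr_set Ioo_ae_eq_Ioc]
    exact MeasureTheory.ae_restrict_mem measurableSet_Ioo
  -- differentiability of the integrand in the parameters, on the ball
  have h_diff : ∀ᵐ v ∂(MeasureTheory.volume.restrict (Set.uIoc (0:ℝ) 1)),
      ∀ p ∈ ball ((β₀ : ℝ), t) ε,
        HasFDerivAt (fun q : ℝ × ℝ => (1 - v) ^ (-q.1) * (x ((q.2 - a) * v + a) - x a))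
          (F' p v) p := by
    filter_upwards [hIoo] with v hv p hp
    obtain ⟨hpc, hpa, hpb⟩ := hball p hp
    have hv0 : (0:ℝ) < 1 - v := by linarith [hv.2]
    have hy : (p.2 - a) * v + a ∈ Set.Ioo a b := by
      constructor
      · nlinarith [hv.1]
      · nlinarith [hv.1, hv.2]
    have h1 : HasFDerivAt (fun q : ℝ × ℝ => (1 - v) ^ (-q.1))
        (((-p.1) * (1 - v) ^ (-p.1 - 1)) • (0 : (ℝ × ℝ) →L[ℝ] ℝ) +
          ((1 - v) ^ (-p.1) * Real.log (1 - v)) • (-(ContinuousLinearMap.fst ℝ ℝ ℝ))) p :=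
      (hasFDerivAt_const (1 - v) p).rpow (hasFDerivAt_fst.neg) hv0
    have hinner : HasFDerivAt (fun q : ℝ × ℝ => (q.2 - a) * v + a)
        (v • ContinuousLinearMap.snd ℝ ℝ ℝ) p :=
      ((hasFDerivAt_snd.sub_const a).mul_const v).add_const a
    have h2 : HasFDerivAt (fun q : ℝ × ℝ => x ((q.2 - a) * v + a) - x a)
        ((x' ((p.2 - a) * v + a)) • (v • ContinuousLinearMap.snd ℝ ℝ ℝ)) p :=
      ((hxd _ hy).comp_hasFDerivAt p hinner).sub_const (x a)
    have hmul := h1.mul h2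
    refine hmul.congr_fderiv ?_
    refine ContinuousLinearMap.ext fun q => ?_
    simp only [hF'_def, ContinuousLinearMap.add_apply, ContinuousLinearMap.smul_apply,
      ContinuousLinearMap.coe_fst', ContinuousLinearMap.coe_snd', ContinuousLinearMap.neg_apply,
      ContinuousLinearMap.zero_apply, smul_eq_mul]
    ring
  -- the uniform bound
  have rpow_mono : ∀ u e₁ e₂ : ℝ, 0 < u → u ≤ 1 → e₁ ≤ e₂ → u ^ (-e₁) ≤ u ^ (-e₂) :=
    fun u e₁ e₂ hu hu1 he => Real.rpow_le_rpow_of_exponent_ge hu hu1 (by linarith)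
  have h_bound : ∀ᵐ v ∂(MeasureTheory.volume.restrict (Set.uIoc (0:ℝ) 1)),
      ∀ p ∈ ball ((β₀ : ℝ), t) ε, ‖F' p v‖ ≤ C * (1 - v) ^ (-c') := by
    filter_upwards [hIoo] with v hv p hp
    obtain ⟨hpc, hpa, hpb⟩ := hball p hp
    have hv0 : (0:ℝ) < 1 - v := by linarith [hv.2]
    have hv1 : (1:ℝ) - v ≤ 1 := by linarith [hv.1]
    have hy : (p.2 - a) * v + a ∈ Set.Icc a b := by
      constructor
      · nlinarith [hv.1]
      · nlinarith [hv.1, hv.2]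
    have hrpow_nonneg : (0:ℝ) ≤ (1 - v) ^ (-p.1) := (Real.rpow_pos_of_pos hv0 _).le
    have hxdiff : ‖x ((p.2 - a) * v + a) - x a‖ ≤ 2 * X := by
      calc ‖x ((p.2 - a) * v + a) - x a‖ ≤ ‖x ((p.2 - a) * v + a)‖ + ‖x a‖ := norm_sub_le _ _
      _ ≤ X + X := add_le_add (hX _ hy) (hX a ⟨le_rfl, hab.le⟩)
      _ = 2 * X := by ring
    have hlog : |Real.log (1 - v)| ≤ (1 - v) ^ (-δ) / δ := by
      rw [abs_of_nonpos (Real.log_nonpos hv0.le hv1), ← Real.log_inv]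
      have h := log_le_rpow_div' (y := (1 - v)⁻¹) (δ := δ) (by positivity) hδ0
      rwa [Real.inv_rpow hv0.le, ← Real.rpow_neg hv0.le] at h
    have hmulpow : (1 - v) ^ (-δ) * (1 - v) ^ (-c) = (1 - v) ^ (-c') := by
      rw [← Real.rpow_add hv0]; congr 1; rw [hc'_def]; ring
    have hrc_nonneg : (0:ℝ) ≤ (1 - v) ^ (-c) := (Real.rpow_pos_of_pos hv0 _).le
    have hrd_nonneg : (0:ℝ) ≤ (1 - v) ^ (-δ) / δ := by
      apply div_nonneg (Real.rpow_pos_of_pos hv0 _).le hδ0.le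
    have hs1 : ‖-Real.log (1 - v) * ((1 - v) ^ (-p.1) * (x ((p.2 - a) * v + a) - x a))‖ ≤
        (1 - v) ^ (-δ) / δ * ((1 - v) ^ (-c) * (2 * X)) := by
      rw [Real.norm_eq_abs, abs_mul, abs_mul, abs_neg, abs_of_nonneg hrpow_nonneg]
      apply mul_le_mul hlog ?_ ?_ hrd_nonneg
      · exact mul_le_mul (rpow_mono _ _ _ hv0 hv1 hpc) hxdiff (abs_nonneg _) hrc_nonneg
      · exact mul_nonneg hrpow_nonneg (abs_nonneg _)
    have hs2 : ‖(1 - v) ^ (-p.1) * (x' ((p.2 - a) * v + a) * v)‖ ≤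
        (1 - v) ^ (-c) * (X' * 1) := by
      rw [Real.norm_eq_abs, abs_mul, abs_mul, abs_of_nonneg hrpow_nonneg]
      apply mul_le_mul (rpow_mono _ _ _ hv0 hv1 hpc) ?_ ?_ hrc_nonneg
      · apply mul_le_mul (hX' _ hy) ?_ (abs_nonneg _) hX'0
        rw [abs_le]; constructor <;> linarith [hv.1, hv.2]
      · exact mul_nonneg (abs_nonneg _) (abs_nonneg _)
    have hfst : ‖ContinuousLinearMap.fst ℝ ℝ ℝ‖ ≤ 1 := ContinuousLinearMap.norm_fst_le ℝ ℝ ℝ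
    have hsnd : ‖ContinuousLinearMap.snd ℝ ℝ ℝ‖ ≤ 1 := ContinuousLinearMap.norm_snd_le ℝ ℝ ℝ
    have hs1n : (0:ℝ) ≤ (1 - v) ^ (-δ) / δ * ((1 - v) ^ (-c) * (2 * X)) :=
      mul_nonneg hrd_nonneg (mul_nonneg hrc_nonneg (by linarith))
    have hs2n : (0:ℝ) ≤ (1 - v) ^ (-c) * (X' * 1) :=
      mul_nonneg hrc_nonneg (by linarith)
    calc ‖F' p v‖ ≤
        ‖(-Real.log (1 - v) * ((1 - v) ^ (-p.1) * (x ((p.2 - a) * v + a) - x a))) •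
          ContinuousLinearMap.fst ℝ ℝ ℝ‖ +
        ‖((1 - v) ^ (-p.1) * (x' ((p.2 - a) * v + a) * v)) •
          ContinuousLinearMap.snd ℝ ℝ ℝ‖ := norm_add_le _ _
      _ ≤ ‖(-Real.log (1 - v) * ((1 - v) ^ (-p.1) * (x ((p.2 - a) * v + a) - x a)))‖ *
            ‖ContinuousLinearMap.fst ℝ ℝ ℝ‖ +
          ‖((1 - v) ^ (-p.1) * (x' ((p.2 - a) * v + a) * v))‖ *
            ‖ContinuousLinearMap.snd ℝ ℝ ℝ‖ :=
          add_le_add (le_of_eq (norm_smul _ (ContinuousLinearMap.fst ℝ ℝ ℝ)))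
            (le_of_eq (norm_smul _ (ContinuousLinearMap.snd ℝ ℝ ℝ)))
      _ ≤ ((1 - v) ^ (-δ) / δ * ((1 - v) ^ (-c) * (2 * X))) * 1 +
          ((1 - v) ^ (-c) * (X' * 1)) * 1 :=
          add_le_add (mul_le_mul hs1 hfst (norm_nonneg _) hs1n)
            (mul_le_mul hs2 hsnd (norm_nonneg _) hs2n)
      _ = 2 * X / δ * ((1 - v) ^ (-δ) * (1 - v) ^ (-c)) + X' * (1 - v) ^ (-c) := by
          field_simp
      _ ≤ C * (1 - v) ^ (-c') := by
          rw [hmulpow, hC_def]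
          have h2 : (1 - v) ^ (-c) ≤ (1 - v) ^ (-c') :=
            rpow_mono _ _ _ hv0 hv1 (by rw [hc'_def]; linarith)
          have hnn : (0:ℝ) ≤ (1 - v) ^ (-c') := (Real.rpow_pos_of_pos hv0 _).le
          have h3 : X' * (1 - v) ^ (-c) ≤ X' * (1 - v) ^ (-c') := by
            apply mul_le_mul_of_nonneg_left h2 hX'0
          have h4 : (0:ℝ) ≤ 2 * X / δ := by positivity
          nlinarith [Real.rpow_pos_of_pos hv0 (-c)]
  -- integrability of the bound
  have bound_integrable : IntervalIntegrable (fun v => C * (1 - v) ^ (-c')) MeasureTheory.volume 0 1 := by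
    have h0 : IntervalIntegrable (fun w : ℝ => w ^ (-c')) MeasureTheory.volume 1 0 :=
      intervalIntegrable_rpow' (by linarith)
    have h1 := h0.comp_sub_left 1
    simp only [sub_self, sub_zero] at h1
    exact h1.const_mul C
  -- continuity helpers
  have hmt : ∀ s : ℝ, a < s → s ≤ b → Set.MapsTo (fun v : ℝ => (s - a) * v + a)
      (Set.Ioo (0:ℝ) 1) (Set.Icc a b) := by
    intro s hs1 hs2 v hv
    simp only [Set.mem_Ioo] at hv
    show (s - a) * v + a ∈ Set.Icc a b
    constructor
    · nlinarith [hv.1]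
    · nlinarith [hv.1, hv.2]
  have haffc : ∀ s : ℝ, Continuous (fun v : ℝ => (s - a) * v + a) :=
    fun s => (continuous_const.mul continuous_id).add continuous_const
  have hrpc : ∀ e : ℝ, ContinuousOn (fun v : ℝ => (1 - v) ^ (-e)) (Set.Ioo (0:ℝ) 1) := by
    intro e
    apply ContinuousOn.rpow_const ((continuous_const.sub continuous_id).continuousOn)
    intro v hv
    simp only [Set.mem_Ioo] at hv
    refine Or.inl ?_
    show 1 - v ≠ 0
    intro h; nlinarith [hv.2]
  have hxcomp : ∀ s : ℝ, a < s → s ≤ b →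
      ContinuousOn (fun v : ℝ => x ((s - a) * v + a) - x a) (Set.Ioo (0:ℝ) 1) :=
    fun s hs1 hs2 => (hx.continuousOn.comp ((haffc s).continuousOn) (hmt s hs1 hs2)).sub
      continuousOn_const
  -- measurability of F p
  have hF_meas : ∀ᶠ p in nhds ((β₀ : ℝ), t), AEStronglyMeasurable
      (fun v => (1 - v) ^ (-p.1) * (x ((p.2 - a) * v + a) - x a))
      (MeasureTheory.volume.restrict (Set.uIoc (0:ℝ) 1)) := by
    filter_upwards [ball_mem_nhds _ hε0] with p hp
    obtain ⟨hpc, hpa, hpb⟩ := hball p hp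
    exact meas_help _ ((hrpc p.1).mul (hxcomp p.2 hpa hpb.le))
  -- integrability of F p₀
  have hF_int : IntervalIntegrable (fun v => (1 - v) ^ (-β₀) * (x ((t - a) * v + a) - x a))
      MeasureTheory.volume 0 1 := by
    apply bound_integrable.mono_fun (meas_help _ ((hrpc β₀).mul (hxcomp t hat htb.le)))
    filter_upwards [hIoo] with v hv
    have hv0 : (0:ℝ) < 1 - v := by linarith [hv.2]
    have hv1 : (1:ℝ) - v ≤ 1 := by linarith [hv.1]
    have hy : (t - a) * v + a ∈ Set.Icc a b := by
      constructor
      · nlinarith [hv.1]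
      · nlinarith [hv.1, hv.2]
    have hrpow_nonneg : (0:ℝ) ≤ (1 - v) ^ (-β₀) := (Real.rpow_pos_of_pos hv0 _).le
    have hxdiff : ‖x ((t - a) * v + a) - x a‖ ≤ 2 * X := by
      calc ‖x ((t - a) * v + a) - x a‖ ≤ ‖x ((t - a) * v + a)‖ + ‖x a‖ := norm_sub_le _ _
      _ ≤ X + X := add_le_add (hX _ hy) (hX a ⟨le_rfl, hab.le⟩)
      _ = 2 * X := by ring
    have hle : (1 - v) ^ (-β₀) ≤ (1 - v) ^ (-c') :=
      rpow_mono _ _ _ hv0 hv1 (by rw [hc'_def, hc_def, hδ_def]; linarith)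
    have hCpos : (0:ℝ) ≤ (1 - v) ^ (-c') := (Real.rpow_pos_of_pos hv0 _).le
    calc ‖(1 - v) ^ (-β₀) * (x ((t - a) * v + a) - x a)‖
        = (1 - v) ^ (-β₀) * ‖x ((t - a) * v + a) - x a‖ := by
          rw [norm_mul, Real.norm_eq_abs ((1-v) ^ (-β₀)), abs_of_nonneg hrpow_nonneg]
      _ ≤ (1 - v) ^ (-c') * (2 * X) := by gcongr
      _ ≤ ‖C * (1 - v) ^ (-c')‖ := by
          rw [Real.norm_eq_abs]
          calc (1 - v) ^ (-c') * (2 * X) ≤ (1 - v) ^ (-c') * C := by gcongr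
            _ = C * (1 - v) ^ (-c') := by ring
            _ ≤ |C * (1 - v) ^ (-c')| := le_abs_self _
  -- measurability of F' p₀
  have hF'_meas : AEStronglyMeasurable (F' ((β₀ : ℝ), t))
      (MeasureTheory.volume.restrict (Set.uIoc (0:ℝ) 1)) := by
    apply meas_help
    apply ContinuousOn.add
    · apply ContinuousOn.fun_smul _ continuousOn_const
      refine ContinuousOn.mul ?_ ((hrpc β₀).mul (hxcomp t hat htb.le))
      refine ContinuousOn.neg (ContinuousOn.log ((continuous_const.sub continuous_id).continuousOn) ?_)
      intro v hv
      intro h; simp only [Set.mem_Ioo] at hv; linarith [hv.2]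
    · apply ContinuousOn.fun_smul _ continuousOn_const
      refine ContinuousOn.mul (hrpc β₀) (ContinuousOn.mul ?_ continuousOn_id)
      exact hx'c.comp ((haffc t).continuousOn) (hmt t hat htb.le)
  have hmain := hasFDerivAt_integral_of_dominated_of_fderiv_le'' (ball_mem_nhds _ hε0) hF_meas hF_int hF'_meas
    h_bound bound_integrable h_diff
  exact hmain.differentiableAt

/-- The digamma (Psi) function: derivative of the logarithm of the Gamma function. -/
noncomputable def psi (t : ℝ) : ℝ := deriv (fun s => Real.log (Real.Gamma s)) t

/-- Type I left Caputo derivative of variable order equals the type II derivative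
minus a correction term involving α' and the digamma function. -/
theorem caputo_typeI_eq_typeII_sub_correction
    (a b : ℝ) (hab : a < b) (x α : ℝ → ℝ)
    (hx : ContDiffOn ℝ 1 x (Set.Icc a b))
    (hα : DifferentiableOn ℝ α (Set.Icc a b))
    (hα01 : ∀ s ∈ Set.Icc a b, α s ∈ Set.Ioo (0 : ℝ) 1)
    (t : ℝ) (ht : t ∈ Set.Ioo a b) :
    (1 / Real.Gamma (1 - α t)) *
        deriv (fun s => ∫ τ in a..s, (s - τ) ^ (-(α s)) * (x τ - x a)) t =
      deriv (fun s => (1 / Real.Gamma (1 - α s)) *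
          ∫ τ in a..s, (s - τ) ^ (-(α s)) * (x τ - x a)) t -
        (deriv α t * psi (1 - α t) / Real.Gamma (1 - α t)) *
          ∫ τ in a..t, (t - τ) ^ (-(α t)) * (x τ - x a) := by
  obtain ⟨hat, htb⟩ := ht
  have htIcc : t ∈ Set.Icc a b := ⟨hat.le, htb.le⟩
  obtain ⟨hα0, hα1⟩ := hα01 t htIcc
  have hΓpos : 0 < Real.Gamma (1 - α t) := Real.Gamma_pos_of_pos (by linarith)
  have hΓne : Real.Gamma (1 - α t) ≠ 0 := hΓpos.ne'
  have hαdiff : DifferentiableAt ℝ α t := (hα t htIcc).differentiableAt (Icc_mem_nhds hat htb)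
  -- differentiability of the scaled kernel integral
  set K : ℝ × ℝ → ℝ :=
    fun p => ∫ v in (0:ℝ)..1, (1 - v) ^ (-p.1) * (x ((p.2 - a) * v + a) - x a) with hK_def
  have hK : DifferentiableAt ℝ K (α t, t) := K_diff a b hab x hx (α t) t ⟨hα0, hα1⟩ ⟨hat, htb⟩
  have hpair : DifferentiableAt ℝ (fun s => ((α s : ℝ), s)) t :=
    hαdiff.prodMk differentiableAt_id
  have hKγ : DifferentiableAt ℝ (fun s => K (α s, s)) t := by
    have h2 := DifferentiableAt.comp (f := fun s => ((α s : ℝ), s)) t hK hpair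
    simpa [Function.comp_def] using h2
  -- eventual factorization of the integral
  have hEq : ∀ᶠ s in nhds t, (∫ τ in a..s, (s - τ) ^ (-(α s)) * (x τ - x a)) =
      (s - a) ^ (1 - α s) * K (α s, s) := by
    filter_upwards [Ioo_mem_nhds hat htb] with s hs
    obtain ⟨has, hsb⟩ := hs
    have hsa : 0 < s - a := by linarith
    have key := intervalIntegral.smul_integral_comp_add_mul
      (fun τ => (s - τ) ^ (-(α s)) * (x τ - x a)) (s - a) a (a := 0) (b := 1)
    have e1 : a + (s - a) * 0 = a := by ring
    have e2 : a + (s - a) * 1 = s := by ring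
    rw [e1, e2] at key
    rw [← key]
    have hcong : (∫ v in (0:ℝ)..1, (s - (a + (s - a) * v)) ^ (-(α s)) * (x (a + (s - a) * v) - x a))
        = ∫ v in (0:ℝ)..1, (s - a) ^ (-(α s)) * ((1 - v) ^ (-(α s)) * (x ((s - a) * v + a) - x a)) := by
      apply intervalIntegral.integral_congr
      intro v hv
      rw [Set.uIcc_of_le zero_le_one, Set.mem_Icc] at hv
      have h1v : (0:ℝ) ≤ 1 - v := by linarith [hv.2]
      have harg : s - (a + (s - a) * v) = (s - a) * (1 - v) := by ring
      have harg2 : a + (s - a) * v = (s - a) * v + a := by ring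
      show (s - (a + (s - a) * v)) ^ (-(α s)) * (x (a + (s - a) * v) - x a)
          = (s - a) ^ (-(α s)) * ((1 - v) ^ (-(α s)) * (x ((s - a) * v + a) - x a))
      rw [harg, harg2, Real.mul_rpow hsa.le h1v]
      ring
    have hKs : K (α s, s) = ∫ v in (0:ℝ)..1, (1 - v) ^ (-(α s)) * (x ((s - a) * v + a) - x a) := by
      rw [hK_def]
    rw [hcong, intervalIntegral.integral_const_mul, hKs, smul_eq_mul, ← mul_assoc]
    congr 1
    conv_rhs => rw [show (1 : ℝ) - α s = 1 + -(α s) from by ring, Real.rpow_add hsa, Real.rpow_one]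
  -- differentiability of the type-I integral
  have hRHSdiff : DifferentiableAt ℝ (fun s => (s - a) ^ (1 - α s) * K (α s, s)) t := by
    apply DifferentiableAt.mul ?_ hKγ
    exact (differentiableAt_id.sub_const a).rpow ((differentiableAt_const 1).sub hαdiff)
      (by show t - a ≠ 0; intro h; linarith)
  have hF : DifferentiableAt ℝ (fun s => ∫ τ in a..s, (s - τ) ^ (-(α s)) * (x τ - x a)) t :=
    hRHSdiff.congr_of_eventuallyEq hEq
  -- derivative of the Gamma factor
  have hGne : ∀ m : ℕ, (1 - α t) ≠ -m := by
    intro m hm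
    have hm0 : (0:ℝ) ≤ (m:ℝ) := Nat.cast_nonneg m
    linarith
  have hΓ1 : HasDerivAt Real.Gamma (deriv Real.Gamma (1 - α t)) (1 - α t) :=
    (Real.differentiableAt_Gamma hGne).hasDerivAt
  have hin : HasDerivAt (fun s => 1 - α s) (-(deriv α t)) t := hαdiff.hasDerivAt.const_sub 1
  have hΓcomp : HasDerivAt (fun s => Real.Gamma (1 - α s))
      (deriv Real.Gamma (1 - α t) * -(deriv α t)) t := by
    have := HasDerivAt.comp t hΓ1 hin
    simpa [Function.comp_def] using this
  have hg : HasDerivAt (fun s => 1 / Real.Gamma (1 - α s))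
      (deriv α t * deriv Real.Gamma (1 - α t) / Real.Gamma (1 - α t) ^ 2) t := by
    have h := hΓcomp.inv hΓne
    simp only [one_div]
    refine h.congr_deriv ?_
    ring
  -- digamma value
  have hpsi : psi (1 - α t) = deriv Real.Gamma (1 - α t) / Real.Gamma (1 - α t) := by
    have hlog : HasDerivAt (fun s => Real.log (Real.Gamma s))
        (deriv Real.Gamma (1 - α t) / Real.Gamma (1 - α t)) (1 - α t) := hΓ1.log hΓne
    exact hlog.deriv
  -- product rule and conclusion
  have hm : HasDerivAt (fun s => (1 / Real.Gamma (1 - α s)) *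
      ∫ τ in a..s, (s - τ) ^ (-(α s)) * (x τ - x a))
      ((deriv α t * deriv Real.Gamma (1 - α t) / Real.Gamma (1 - α t) ^ 2) *
        (∫ τ in a..t, (t - τ) ^ (-(α t)) * (x τ - x a)) +
       (1 / Real.Gamma (1 - α t)) *
        deriv (fun s => ∫ τ in a..s, (s - τ) ^ (-(α s)) * (x τ - x a)) t) t :=
    hg.mul hF.hasDerivAt
  rw [hpsi, hm.deriv]
  field_simp
  ring
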